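/- Let k be a field, let R and S be polynomial rings over k in at least one variable each, with graded maximal ideals m and n, let I ⊆ m² and J ⊆ n² be proper homogeneous ideals, let T = R ⊗_k S, and let F = I + J + mn ⊆ T. If depth(R/I) ≥ 1 and depth(S/J) ≥ 1, then for every integer s ≥ 1 one has F^{(s)} = (I + n)^{(s)} ∩ (J + m)^{(s)}. -/

import Mathlib

/- STATEMENT 10: k a field, R and S polynomial rings over k in at least one variable each
with graded maximal ideals m and n, I ⊆ m² and J ⊆ n² proper homogeneous ideals,
T = R ⊗_k S, F = I + J + mn. If depth(R/I) ≥ 1 and depth(S/J) ≥ 1 (equivalently the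
graded maximal ideals are non-associated), then for every s ≥ 1:
F^{(s)} = (I + n)^{(s)} ∩ (J + m)^{(s)}. -/

open MvPolynomial

noncomputable section

/-- The graded maximal ideal of a polynomial ring, generated by the variables. -/
def mxI (k : Type*) [Field k] (σ : Type*) : Ideal (MvPolynomial σ k) :=
  Ideal.span (Set.range MvPolynomial.X)

/-- An ideal of a polynomial ring is homogeneous if it contains every homogeneous
component of each of its elements. -/
def IsHomogIdeal {k : Type*} [Field k] {σ : Type*} (I : Ideal (MvPolynomial σ k)) : Prop :=
  ∀ f ∈ I, ∀ d : ℕ, MvPolynomial.homogeneousComponent d f ∈ I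

/-- The `s`-th symbolic power of an ideal `a`: the intersection over all associated primes `P`
of `A ⧸ a` of the contraction of `a ^ s` extended to the localization at `P`. -/
def symbPow {A : Type*} [CommRing A] (a : Ideal A) (s : ℕ) : Ideal A :=
  sInf { J : Ideal A | ∃ (P : Ideal A) (hP : P ∈ associatedPrimes A (A ⧸ a)),
      haveI : P.IsPrime := IsAssociatedPrime.isPrime hP
      J = (Ideal.map (algebraMap A (Localization.AtPrime P)) (a ^ s)).comap
            (algebraMap A (Localization.AtPrime P)) }


section Helpers





/-- Associated primes of the middle of an exact sequence. -/
theorem assocP_subset_union_of_exact {A : Type*} [CommRing A]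
    {M₁ M₂ M₃ : Type*} [AddCommGroup M₁] [AddCommGroup M₂] [AddCommGroup M₃]
    [Module A M₁] [Module A M₂] [Module A M₃]
    (f : M₁ →ₗ[A] M₂) (g : M₂ →ₗ[A] M₃) (hf : Function.Injective f)
    (hfg : LinearMap.range f = LinearMap.ker g) :
    associatedPrimes A M₂ ⊆ associatedPrimes A M₁ ∪ associatedPrimes A M₃ := by
  exact associatedPrimes.subset_union_of_exact hf (by rw [LinearMap.exact_iff]; exact hfg.symm)

theorem le_of_mem_assocP_quotient {A : Type*} [CommRing A] {K P : Ideal A}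
    (hP : P ∈ associatedPrimes A (A ⧸ K)) : K ≤ P := by
  obtain ⟨hPp, x, hx⟩ := hP
  obtain ⟨a, rfl⟩ := Submodule.Quotient.mk_surjective _ x
  intro c hc
  rw [hx]; apply Ideal.le_radical
  rw [Submodule.mem_colon_singleton, Submodule.mem_bot, ← Submodule.Quotient.mk_smul,
    Submodule.Quotient.mk_eq_zero]
  rw [smul_eq_mul]; exact K.mul_mem_right a hc




/-- Ass(A/(P∩Q)) ⊆ Ass(A/P) ∪ Ass(A/Q) -/
theorem assocP_inf_subset {A : Type*} [CommRing A] (P Q : Ideal A) :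
    associatedPrimes A (A ⧸ (P ⊓ Q)) ⊆
      associatedPrimes A (A ⧸ P) ∪ associatedPrimes A (A ⧸ Q) := by
  have h1 : (P ⊓ Q : Ideal A) ≤ Submodule.comap LinearMap.id P := inf_le_left
  have h2 : (P ⊓ Q : Ideal A) ≤ Submodule.comap LinearMap.id Q := inf_le_right
  set f : (A ⧸ (P ⊓ Q)) →ₗ[A] (A ⧸ P) × (A ⧸ Q) :=
    LinearMap.prod (Submodule.mapQ _ _ LinearMap.id h1) (Submodule.mapQ _ _ LinearMap.id h2) with hfdef
  have hinj : Function.Injective f := by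
    rw [← LinearMap.ker_eq_bot]
    rw [eq_bot_iff]
    rintro x hx
    obtain ⟨a, rfl⟩ := Submodule.Quotient.mk_surjective _ x
    have hx' := LinearMap.mem_ker.mp hx
    have hxP : Submodule.mapQ _ _ LinearMap.id h1 (Submodule.Quotient.mk a) = 0 :=
      congrArg Prod.fst hx'
    have hxQ : Submodule.mapQ _ _ LinearMap.id h2 (Submodule.Quotient.mk a) = 0 :=
      congrArg Prod.snd hx'
    rw [Submodule.mapQ_apply] at hxP hxQ
    rw [Submodule.Quotient.mk_eq_zero] at hxP hxQ
    simp only [Submodule.mem_bot]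
    rw [Submodule.Quotient.mk_eq_zero]
    exact ⟨hxP, hxQ⟩
  refine (associatedPrimes.subset_of_injective hinj).trans ?_
  exact assocP_subset_union_of_exact (LinearMap.inl A (A ⧸ P) (A ⧸ Q))
    (LinearMap.snd A (A ⧸ P) (A ⧸ Q)) LinearMap.inl_injective (LinearMap.range_inl A _ _)




/-- If P ⊔ Q is maximal and not an associated prime of A/P, then
Ass(A/P) ⊆ Ass(A/(P∩Q)). -/
theorem assocP_quot_subset {A : Type*} [CommRing A] [IsNoetherianRing A] (P Q : Ideal A)
    (hmax : (P ⊔ Q).IsMaximal) (hP : P ⊔ Q ∉ associatedPrimes A (A ⧸ P)) :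
    associatedPrimes A (A ⧸ P) ⊆ associatedPrimes A (A ⧸ (P ⊓ Q)) := by
  classical
  set θ : ↥(Q : Submodule A A) →ₗ[A] A ⧸ P := P.mkQ.comp (Submodule.subtype _) with hθ
  have hsup : P ≤ Submodule.comap LinearMap.id ((P ⊔ Q : Ideal A) : Submodule A A) :=
    le_sup_left
  set g : (A ⧸ P) →ₗ[A] A ⧸ (P ⊔ Q) := Submodule.mapQ _ _ LinearMap.id hsup with hg
  have hrange : LinearMap.range ((LinearMap.range θ).subtype) = LinearMap.ker g := by
    rw [Submodule.range_subtype]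
    ext x
    obtain ⟨a, rfl⟩ := Submodule.Quotient.mk_surjective _ x
    constructor
    · rintro ⟨q, hq⟩
      rw [LinearMap.mem_ker, hg, Submodule.mapQ_apply, LinearMap.id_apply,
        Submodule.Quotient.mk_eq_zero]
      have hdiff : a - (q : A) ∈ P := by
        rw [hθ] at hq
        simp only [LinearMap.comp_apply, Submodule.subtype_apply, Submodule.mkQ_apply] at hq
        have := (Submodule.Quotient.eq (p := P)).mp hq
        simpa using P.neg_mem this
      have : a = (a - (q : A)) + (q : A) := by ring
      rw [this]
      exact Submodule.add_mem _ (Submodule.mem_sup_left hdiff) (Submodule.mem_sup_right q.2)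
    · intro hx
      rw [LinearMap.mem_ker, hg, Submodule.mapQ_apply, LinearMap.id_apply,
        Submodule.Quotient.mk_eq_zero] at hx
      obtain ⟨p, hp, q, hq, rfl⟩ := Submodule.mem_sup.mp hx
      refine ⟨⟨q, hq⟩, ?_⟩
      rw [hθ]
      simp only [LinearMap.comp_apply, Submodule.subtype_apply, Submodule.mkQ_apply]
      rw [Submodule.Quotient.eq]
      simpa using P.neg_mem hp
  intro P0 hP0
  rcases assocP_subset_union_of_exact ((LinearMap.range θ).subtype) g
      (Submodule.injective_subtype _) hrange hP0 with h | h
  · -- transfer through range θ ≅ Q ⧸ ker θ and inject into A ⧸ (P ⊓ Q)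
    have e := (LinearMap.quotKerEquivRange θ).symm
    have h2 : P0 ∈ associatedPrimes A (↥(Q : Submodule A A) ⧸ LinearMap.ker θ) :=
      (LinearEquiv.AssociatedPrimes.eq e) ▸ h
    have hle : LinearMap.ker θ ≤
        LinearMap.ker ((P ⊓ Q : Ideal A).mkQ.comp (Submodule.subtype _)) := by
      intro x hx
      rw [LinearMap.mem_ker] at hx ⊢
      simp only [hθ, LinearMap.comp_apply, Submodule.subtype_apply, Submodule.mkQ_apply,
        Submodule.Quotient.mk_eq_zero] at hx ⊢
      exact ⟨hx, x.2⟩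
    set η : (↥(Q : Submodule A A) ⧸ LinearMap.ker θ) →ₗ[A] A ⧸ (P ⊓ Q) :=
      Submodule.liftQ _ _ hle with hη
    have hηinj : Function.Injective η := by
      rw [← LinearMap.ker_eq_bot, hη]
      apply Submodule.ker_liftQ_eq_bot
      intro x hx
      rw [LinearMap.mem_ker] at hx ⊢
      simp only [LinearMap.comp_apply, Submodule.subtype_apply, Submodule.mkQ_apply,
        Submodule.Quotient.mk_eq_zero] at hx ⊢
      simp only [hθ, LinearMap.comp_apply, Submodule.subtype_apply, Submodule.mkQ_apply,
        Submodule.Quotient.mk_eq_zero]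
      exact hx.1
    exact associatedPrimes.subset_of_injective hηinj h2
  · exfalso
    have : associatedPrimes A (A ⧸ (P ⊔ Q)) = {(P ⊔ Q).radical} :=
      associatedPrimes.eq_singleton_of_isPrimary hmax.isPrime.isPrimary
    rw [this, Set.mem_singleton_iff, hmax.isPrime.radical] at h
    subst h
    -- h : P0 = radical; but hP0 : P0 ∈ Ass(A⧸P)
    exact hP hP0


theorem map_mem_assocP_of_surjective {A B FF : Type*} [CommRing A] [CommRing B] [IsNoetherianRing A]
    [FunLike FF A B] [RingHomClass FF A B]
    (f : FF) (hf : Function.Surjective f) (K : Ideal B) {P : Ideal A}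
    (hP : P ∈ associatedPrimes A (A ⧸ Ideal.comap f K)) :
    Ideal.map f P ∈ associatedPrimes B (B ⧸ K) := by
  obtain ⟨hPp, x, hx⟩ := isAssociatedPrime_iff.mp hP
  obtain ⟨a, rfl⟩ := Submodule.Quotient.mk_surjective _ x
  have hmem : ∀ c : A, c ∈ P ↔ c * a ∈ Ideal.comap f K := by
    intro c
    rw [hx, Submodule.mem_colon_singleton, Submodule.mem_bot, ← Submodule.Quotient.mk_smul,
      Submodule.Quotient.mk_eq_zero, smul_eq_mul]
  have hker : RingHom.ker f ≤ P := by
    intro c hc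
    rw [hmem, Ideal.mem_comap, map_mul]
    rw [RingHom.mem_ker] at hc
    rw [hc, zero_mul]
    exact K.zero_mem
  have hPm := Ideal.map_isPrime_of_surjective hf hker
  refine ⟨hPm, Submodule.Quotient.mk (f a), ?_⟩
  suffices hs : Ideal.map f P = Submodule.colon ⊥ {Submodule.Quotient.mk (f a)} by
    rw [← hs, hPm.radical]
  ext r
  rw [Submodule.mem_colon_singleton, Submodule.mem_bot]
  obtain ⟨c, rfl⟩ := hf r
  have hsmul : (f c) • (Submodule.Quotient.mk (f a) : B ⧸ K) =
      Submodule.Quotient.mk (f (c * a)) := by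
    rw [← Submodule.Quotient.mk_smul, smul_eq_mul, map_mul]
  constructor
  · intro hr
    obtain ⟨c', hc', hcc'⟩ := Ideal.mem_map_iff_of_surjective f hf |>.mp hr
    have : c - c' ∈ RingHom.ker f := by
      rw [RingHom.mem_ker, map_sub, hcc', sub_self]
    have hcP : c ∈ P := by
      have := P.add_mem (hker this) hc'
      simpa using this
    have : c * a ∈ Ideal.comap f K := (hmem c).mp hcP
    rw [Ideal.mem_comap] at this
    rw [hsmul, Submodule.Quotient.mk_eq_zero]
    exact this
  · intro hr
    rw [hsmul, Submodule.Quotient.mk_eq_zero] at hr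
    have : c ∈ P := (hmem c).mpr (Ideal.mem_comap.mpr hr)
    exact Ideal.mem_map_of_mem f this


theorem loc_map_eq {A : Type*} [CommRing A] (P : Ideal A) [hP : P.IsPrime]
    (a b : Ideal A) (hab : a ≤ b) (x : A) (hx : x ∉ P)
    (hxb : ∀ g ∈ b, x * g ∈ a) :
    Ideal.map (algebraMap A (Localization.AtPrime P)) a =
      Ideal.map (algebraMap A (Localization.AtPrime P)) b := by
  apply le_antisymm (Ideal.map_mono hab)
  rw [Ideal.map_le_iff_le_comap]
  intro g hg
  rw [Ideal.mem_comap]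
  have hu : IsUnit (algebraMap A (Localization.AtPrime P) x) :=
    IsLocalization.map_units _ (⟨x, hx⟩ : P.primeCompl)
  have h1 : algebraMap A (Localization.AtPrime P) (x * g) ∈
      Ideal.map (algebraMap A (Localization.AtPrime P)) a :=
    Ideal.mem_map_of_mem _ (hxb g hg)
  rw [map_mul] at h1
  have h2 := Ideal.mul_mem_left _ (↑hu.unit⁻¹) h1
  rwa [← mul_assoc, IsUnit.val_inv_mul, one_mul] at h2


variable {k : Type*} [Field k] {σ τ : Type*}









theorem sub_C_constantCoeff_mem (f : MvPolynomial σ k) :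
    f - C (constantCoeff f) ∈ mxI k σ := by
  induction f using MvPolynomial.induction_on with
  | C a => simp [mxI]
  | add p q hp hq =>
      have : p + q - C (constantCoeff (p + q)) =
          (p - C (constantCoeff p)) + (q - C (constantCoeff q)) := by
        rw [map_add, map_add]; ring
      rw [this]; exact Ideal.add_mem _ hp hq
  | mul_X p i hp =>
      have hX : X i ∈ mxI k σ := Ideal.subset_span ⟨i, rfl⟩
      have : p * X i - C (constantCoeff (p * X i)) = p * X i := by
        rw [map_mul, constantCoeff_X, mul_zero, map_zero, sub_zero]
      rw [this]
      exact Ideal.mul_mem_left _ p hX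

theorem mxI_eq_ker :
    mxI k σ = RingHom.ker (constantCoeff : MvPolynomial σ k →+* k) := by
  apply le_antisymm
  · rw [mxI, Ideal.span_le]
    rintro x ⟨i, rfl⟩
    simp [RingHom.mem_ker]
  · intro f hf
    rw [RingHom.mem_ker] at hf
    have := sub_C_constantCoeff_mem f
    rwa [hf, map_zero, sub_zero] at this

theorem mxI_isMaximal : (mxI k σ).IsMaximal := by
  rw [mxI_eq_ker]
  exact RingHom.ker_isMaximal_of_surjective _ (fun a => ⟨C a, constantCoeff_C _ a⟩)







/-- projection T → R killing the `inr` variables -/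
def psiL (k : Type*) [Field k] (σ τ : Type*) :
    MvPolynomial (σ ⊕ τ) k →ₐ[k] MvPolynomial σ k :=
  aeval (Sum.elim X fun _ => 0)

def nId (k : Type*) [Field k] (σ τ : Type*) : Ideal (MvPolynomial (σ ⊕ τ) k) :=
  Ideal.span (Set.range fun j : τ => (X (Sum.inr j) : MvPolynomial (σ ⊕ τ) k))

theorem psiL_rename (g : MvPolynomial σ k) :
    psiL k σ τ (rename Sum.inl g) = g := by
  rw [psiL, aeval_rename]
  have : (Sum.elim X (fun _ => 0) ∘ (Sum.inl : σ → σ ⊕ τ) : σ → MvPolynomial σ k) = X := by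
    funext i; simp
  rw [this, aeval_X_left_apply]

theorem psiL_X_inr (j : τ) : psiL k σ τ (X (Sum.inr j)) = 0 := by
  simp [psiL]

theorem psiL_X_inl (i : σ) : psiL k σ τ (X (Sum.inl i)) = X i := by
  simp [psiL]

theorem sub_rename_psiL_mem (f : MvPolynomial (σ ⊕ τ) k) :
    f - rename Sum.inl (psiL k σ τ f) ∈ nId k σ τ := by
  induction f using MvPolynomial.induction_on with
  | C a => simp [psiL]
  | add p q hp hq =>
      have : p + q - rename Sum.inl (psiL k σ τ (p + q)) =
          (p - rename Sum.inl (psiL k σ τ p)) + (q - rename Sum.inl (psiL k σ τ q)) := by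
        rw [map_add, map_add]; ring
      rw [this]; exact Ideal.add_mem _ hp hq
  | mul_X p i hp =>
      cases i with
      | inl i =>
          have : p * X (Sum.inl i) - rename Sum.inl (psiL k σ τ (p * X (Sum.inl i))) =
              (p - rename Sum.inl (psiL k σ τ p)) * X (Sum.inl i) := by
            rw [map_mul, psiL_X_inl, map_mul, rename_X]; ring
          rw [this]
          exact Ideal.mul_mem_right _ _ hp
      | inr j =>
          have : p * X (Sum.inr j) - rename Sum.inl (psiL k σ τ (p * X (Sum.inr j))) =
              p * X (Sum.inr j) := by
            rw [map_mul, psiL_X_inr, mul_zero, map_zero, sub_zero]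
          rw [this]
          exact Ideal.mul_mem_left _ p (Ideal.subset_span ⟨j, rfl⟩)

theorem comap_psiL (K : Ideal (MvPolynomial σ k)) :
    Ideal.comap (psiL k σ τ) K =
      Ideal.map (rename (Sum.inl : σ → σ ⊕ τ) :
        MvPolynomial σ k →ₐ[k] MvPolynomial (σ ⊕ τ) k) K ⊔ nId k σ τ := by
  apply le_antisymm
  · intro f hf
    rw [Ideal.mem_comap] at hf
    have h1 : rename Sum.inl (psiL k σ τ f) ∈
        Ideal.map (rename (Sum.inl : σ → σ ⊕ τ) :
          MvPolynomial σ k →ₐ[k] MvPolynomial (σ ⊕ τ) k) K :=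
      Ideal.mem_map_of_mem _ hf
    have h2 := sub_rename_psiL_mem (k := k) (σ := σ) (τ := τ) f
    have : f = rename Sum.inl (psiL k σ τ f) + (f - rename Sum.inl (psiL k σ τ f)) := by ring
    rw [this]
    exact Ideal.add_mem _ (Ideal.mem_sup_left h1) (Ideal.mem_sup_right h2)
  · apply sup_le
    · rw [Ideal.map_le_iff_le_comap]
      intro g hg
      rw [Ideal.mem_comap, Ideal.mem_comap, psiL_rename]
      exact hg
    · rw [nId, Ideal.span_le]
      rintro x ⟨j, rfl⟩
      rw [SetLike.mem_coe, Ideal.mem_comap, psiL_X_inr]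
      exact K.zero_mem

theorem map_psiL_map_rename (K : Ideal (MvPolynomial σ k)) :
    Ideal.map (psiL k σ τ) (Ideal.map (rename (Sum.inl : σ → σ ⊕ τ) :
        MvPolynomial σ k →ₐ[k] MvPolynomial (σ ⊕ τ) k) K) = K := by
  apply le_antisymm
  · rw [Ideal.map_le_iff_le_comap, Ideal.map_le_iff_le_comap]
    intro g hg
    rw [Ideal.mem_comap, Ideal.mem_comap, psiL_rename]
    exact hg
  · intro g hg
    have : g = psiL k σ τ (rename Sum.inl g) := (psiL_rename g).symm
    rw [this]
    exact Ideal.mem_map_of_mem _ (Ideal.mem_map_of_mem _ hg)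

theorem map_psiL_nId : Ideal.map (psiL k σ τ) (nId k σ τ) = ⊥ := by
  rw [eq_bot_iff, Ideal.map_le_iff_le_comap, nId, Ideal.span_le]
  rintro x ⟨j, rfl⟩
  rw [SetLike.mem_coe, Ideal.mem_comap, psiL_X_inr]
  exact Ideal.zero_mem ⊥







def mId (k : Type*) [Field k] (σ τ : Type*) : Ideal (MvPolynomial (σ ⊕ τ) k) :=
  Ideal.span (Set.range fun i : σ => (X (Sum.inl i) : MvPolynomial (σ ⊕ τ) k))



theorem map_rename_inl_mxI :
    Ideal.map (rename (Sum.inl : σ → σ ⊕ τ) :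
      MvPolynomial σ k →ₐ[k] MvPolynomial (σ ⊕ τ) k) (mxI k σ) = mId k σ τ := by
  rw [mxI, mId, Ideal.map_span]
  congr 1
  ext f
  constructor
  · rintro ⟨x, ⟨i, rfl⟩, rfl⟩
    exact ⟨i, by simp⟩
  · rintro ⟨i, rfl⟩
    exact ⟨X i, ⟨i, rfl⟩, by simp⟩

theorem map_rename_inr_mxI :
    Ideal.map (rename (Sum.inr : τ → σ ⊕ τ) :
      MvPolynomial τ k →ₐ[k] MvPolynomial (σ ⊕ τ) k) (mxI k τ) = nId k σ τ := by
  rw [mxI, nId, Ideal.map_span]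
  congr 1
  ext f
  constructor
  · rintro ⟨x, ⟨i, rfl⟩, rfl⟩
    exact ⟨i, by simp⟩
  · rintro ⟨i, rfl⟩
    exact ⟨X i, ⟨i, rfl⟩, by simp⟩

theorem mxI_sum_eq : mxI k (σ ⊕ τ) = mId k σ τ ⊔ nId k σ τ := by
  rw [mxI, mId, nId, ← Ideal.span_union]
  congr 1
  ext f
  constructor
  · rintro ⟨i, rfl⟩
    cases i with
    | inl i => exact Or.inl ⟨i, rfl⟩
    | inr j => exact Or.inr ⟨j, rfl⟩
  · rintro (⟨i, rfl⟩ | ⟨j, rfl⟩)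
    · exact ⟨Sum.inl i, rfl⟩
    · exact ⟨Sum.inr j, rfl⟩

theorem mId_inf_nId_le : mId k σ τ ⊓ nId k σ τ ≤ mId k σ τ * nId k σ τ := by
  intro f hf
  obtain ⟨hfm, hfn⟩ := hf
  have hm : ∀ d ∈ f.support, ∃ i : σ, (d : (σ ⊕ τ) →₀ ℕ) (Sum.inl i) ≠ 0 := by
    have : f ∈ Ideal.span (X '' (Set.range (Sum.inl : σ → σ ⊕ τ))) := by
      rw [show (X '' (Set.range (Sum.inl : σ → σ ⊕ τ)) :
          Set (MvPolynomial (σ ⊕ τ) k)) =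
          Set.range fun i : σ => (X (Sum.inl i) : MvPolynomial (σ ⊕ τ) k) by
        rw [← Set.range_comp]; rfl]
      exact hfm
    intro d hd
    obtain ⟨i, ⟨i', rfl⟩, hi⟩ := mem_ideal_span_X_image.mp this d hd
    exact ⟨i', hi⟩
  have hn : ∀ d ∈ f.support, ∃ j : τ, (d : (σ ⊕ τ) →₀ ℕ) (Sum.inr j) ≠ 0 := by
    have : f ∈ Ideal.span (X '' (Set.range (Sum.inr : τ → σ ⊕ τ))) := by
      rw [show (X '' (Set.range (Sum.inr : τ → σ ⊕ τ)) :
          Set (MvPolynomial (σ ⊕ τ) k)) =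
          Set.range fun j : τ => (X (Sum.inr j) : MvPolynomial (σ ⊕ τ) k) by
        rw [← Set.range_comp]; rfl]
      exact hfn
    intro d hd
    obtain ⟨i, ⟨j', rfl⟩, hj⟩ := mem_ideal_span_X_image.mp this d hd
    exact ⟨j', hj⟩
  rw [← support_sum_monomial_coeff f]
  apply Ideal.sum_mem
  intro d hd
  obtain ⟨i, hi⟩ := hm d hd
  obtain ⟨j, hj⟩ := hn d hd
  set e : (σ ⊕ τ) →₀ ℕ := Finsupp.single (Sum.inl i) 1 + Finsupp.single (Sum.inr j) 1 with he
  have hed : e ≤ d := by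
    intro x
    rcases eq_or_ne x (Sum.inl i) with rfl | hxi
    · have : e (Sum.inl i) = 1 := by simp [he]
      rw [this]
      exact Nat.one_le_iff_ne_zero.mpr hi
    · rcases eq_or_ne x (Sum.inr j) with rfl | hxj
      · have : e (Sum.inr j) = 1 := by simp [he]
        rw [this]
        exact Nat.one_le_iff_ne_zero.mpr hj
      · have : e x = 0 := by
          simp [he, Finsupp.single_apply, (Ne.symm hxi), (Ne.symm hxj)]
        simp [this]
  have hdec : monomial d (coeff d f) =
      (X (Sum.inl i) * X (Sum.inr j)) * monomial (d - e) (coeff d f) := by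
    rw [X, X, monomial_mul, monomial_mul, one_mul, one_mul, ← he]
    congr 1
    rw [add_tsub_cancel_of_le hed]
  rw [hdec]
  exact Ideal.mul_mem_right _ _
    (Ideal.mul_mem_mul (Ideal.subset_span ⟨i, rfl⟩) (Ideal.subset_span ⟨j, rfl⟩))









def psiR (k : Type*) [Field k] (σ τ : Type*) :
    MvPolynomial (σ ⊕ τ) k →ₐ[k] MvPolynomial τ k :=
  aeval (Sum.elim (fun _ => 0) X)

theorem psiR_rename (g : MvPolynomial τ k) :
    psiR k σ τ (rename Sum.inr g) = g := by
  rw [psiR, aeval_rename]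
  have : (Sum.elim (fun _ => 0) X ∘ (Sum.inr : τ → σ ⊕ τ) : τ → MvPolynomial τ k) = X := by
    funext i; simp
  rw [this, aeval_X_left_apply]

theorem psiR_X_inl (i : σ) : psiR k σ τ (X (Sum.inl i)) = 0 := by
  simp [psiR]

theorem psiR_X_inr (j : τ) : psiR k σ τ (X (Sum.inr j)) = X j := by
  simp [psiR]

theorem sub_rename_psiR_mem (f : MvPolynomial (σ ⊕ τ) k) :
    f - rename Sum.inr (psiR k σ τ f) ∈ mId k σ τ := by
  induction f using MvPolynomial.induction_on with
  | C a => simp [psiR]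
  | add p q hp hq =>
      have : p + q - rename Sum.inr (psiR k σ τ (p + q)) =
          (p - rename Sum.inr (psiR k σ τ p)) + (q - rename Sum.inr (psiR k σ τ q)) := by
        rw [map_add, map_add]; ring
      rw [this]; exact Ideal.add_mem _ hp hq
  | mul_X p i hp =>
      cases i with
      | inr j =>
          have : p * X (Sum.inr j) - rename Sum.inr (psiR k σ τ (p * X (Sum.inr j))) =
              (p - rename Sum.inr (psiR k σ τ p)) * X (Sum.inr j) := by
            rw [map_mul, psiR_X_inr, map_mul, rename_X]; ring
          rw [this]
          exact Ideal.mul_mem_right _ _ hp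
      | inl i =>
          have : p * X (Sum.inl i) - rename Sum.inr (psiR k σ τ (p * X (Sum.inl i))) =
              p * X (Sum.inl i) := by
            rw [map_mul, psiR_X_inl, mul_zero, map_zero, sub_zero]
          rw [this]
          exact Ideal.mul_mem_left _ p (Ideal.subset_span ⟨i, rfl⟩)

theorem comap_psiR (K : Ideal (MvPolynomial τ k)) :
    Ideal.comap (psiR k σ τ) K =
      Ideal.map (rename (Sum.inr : τ → σ ⊕ τ) :
        MvPolynomial τ k →ₐ[k] MvPolynomial (σ ⊕ τ) k) K ⊔ mId k σ τ := by
  apply le_antisymm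
  · intro f hf
    rw [Ideal.mem_comap] at hf
    have h1 : rename Sum.inr (psiR k σ τ f) ∈
        Ideal.map (rename (Sum.inr : τ → σ ⊕ τ) :
          MvPolynomial τ k →ₐ[k] MvPolynomial (σ ⊕ τ) k) K :=
      Ideal.mem_map_of_mem _ hf
    have h2 := sub_rename_psiR_mem (k := k) (σ := σ) (τ := τ) f
    have : f = rename Sum.inr (psiR k σ τ f) + (f - rename Sum.inr (psiR k σ τ f)) := by ring
    rw [this]
    exact Ideal.add_mem _ (Ideal.mem_sup_left h1) (Ideal.mem_sup_right h2)
  · apply sup_le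
    · rw [Ideal.map_le_iff_le_comap]
      intro g hg
      rw [Ideal.mem_comap, Ideal.mem_comap, psiR_rename]
      exact hg
    · rw [mId, Ideal.span_le]
      rintro x ⟨i, rfl⟩
      rw [SetLike.mem_coe, Ideal.mem_comap, psiR_X_inl]
      exact K.zero_mem

theorem map_psiR_map_rename (K : Ideal (MvPolynomial τ k)) :
    Ideal.map (psiR k σ τ) (Ideal.map (rename (Sum.inr : τ → σ ⊕ τ) :
        MvPolynomial τ k →ₐ[k] MvPolynomial (σ ⊕ τ) k) K) = K := by
  apply le_antisymm
  · rw [Ideal.map_le_iff_le_comap, Ideal.map_le_iff_le_comap]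
    intro g hg
    rw [Ideal.mem_comap, Ideal.mem_comap, psiR_rename]
    exact hg
  · intro g hg
    have : g = psiR k σ τ (rename Sum.inr g) := (psiR_rename g).symm
    rw [this]
    exact Ideal.mem_map_of_mem _ (Ideal.mem_map_of_mem _ hg)

theorem map_psiR_mId : Ideal.map (psiR k σ τ) (mId k σ τ) = ⊥ := by
  rw [eq_bot_iff, Ideal.map_le_iff_le_comap, mId, Ideal.span_le]
  rintro x ⟨i, rfl⟩
  rw [SetLike.mem_coe, Ideal.mem_comap, psiR_X_inl]
  exact Ideal.zero_mem ⊥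

end Helpers

theorem symbPow_fiberProduct_eq_inf
    (k : Type*) [Field k] (a b : ℕ) (ha : 0 < a) (hb : 0 < b)
    (I : Ideal (MvPolynomial (Fin a) k)) (hIm : I ≤ mxI k (Fin a) ^ 2)
    (hIproper : I ≠ ⊤) (hIhom : IsHomogIdeal I)
    (J : Ideal (MvPolynomial (Fin b) k)) (hJn : J ≤ mxI k (Fin b) ^ 2)
    (hJproper : J ≠ ⊤) (hJhom : IsHomogIdeal J)
    -- `depth(R/I) ≥ 1` and `depth(S/J) ≥ 1`, equivalently the graded maximal ideals are
    -- not associated primes of `R/I` and `S/J` respectively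
    (hdepthI : mxI k (Fin a) ∉
      associatedPrimes (MvPolynomial (Fin a) k) (MvPolynomial (Fin a) k ⧸ I))
    (hdepthJ : mxI k (Fin b) ∉
      associatedPrimes (MvPolynomial (Fin b) k) (MvPolynomial (Fin b) k ⧸ J))
    (I' J' m' n' : Ideal (MvPolynomial (Fin a ⊕ Fin b) k))
    (hI' : I' = Ideal.map (rename (Sum.inl : Fin a → Fin a ⊕ Fin b) :
      MvPolynomial (Fin a) k →ₐ[k] MvPolynomial (Fin a ⊕ Fin b) k) I)
    (hJ' : J' = Ideal.map (rename (Sum.inr : Fin b → Fin a ⊕ Fin b) :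
      MvPolynomial (Fin b) k →ₐ[k] MvPolynomial (Fin a ⊕ Fin b) k) J)
    (hm' : m' = Ideal.map (rename (Sum.inl : Fin a → Fin a ⊕ Fin b) :
      MvPolynomial (Fin a) k →ₐ[k] MvPolynomial (Fin a ⊕ Fin b) k) (mxI k (Fin a)))
    (hn' : n' = Ideal.map (rename (Sum.inr : Fin b → Fin a ⊕ Fin b) :
      MvPolynomial (Fin b) k →ₐ[k] MvPolynomial (Fin a ⊕ Fin b) k) (mxI k (Fin b)))
    (F : Ideal (MvPolynomial (Fin a ⊕ Fin b) k)) (hF : F = I' + J' + m' * n')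
    (s : ℕ) (hs : 1 ≤ s) :
    symbPow F s = symbPow (I' + n') s ⊓ symbPow (J' + m') s := by
  classical
  subst hF
  have hm2 : m' = mId k (Fin a) (Fin b) := by rw [hm', map_rename_inl_mxI]
  have hn2 : n' = nId k (Fin a) (Fin b) := by rw [hn', map_rename_inr_mxI]
  subst hm2 hn2
  simp only [Submodule.add_eq_sup]
  -- basic inclusions
  have hIm' : I' ≤ mId k (Fin a) (Fin b) := by
    have h1 : I' ≤ Ideal.map (rename (Sum.inl : Fin a → Fin a ⊕ Fin b) :
        MvPolynomial (Fin a) k →ₐ[k] MvPolynomial (Fin a ⊕ Fin b) k) (mxI k (Fin a) ^ 2) := by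
      rw [hI']; exact Ideal.map_mono hIm
    rw [Ideal.map_pow, map_rename_inl_mxI] at h1
    exact h1.trans (Ideal.pow_le_self two_ne_zero)
  have hJn' : J' ≤ nId k (Fin a) (Fin b) := by
    have h1 : J' ≤ Ideal.map (rename (Sum.inr : Fin b → Fin a ⊕ Fin b) :
        MvPolynomial (Fin b) k →ₐ[k] MvPolynomial (Fin a ⊕ Fin b) k) (mxI k (Fin b) ^ 2) := by
      rw [hJ']; exact Ideal.map_mono hJn
    rw [Ideal.map_pow, map_rename_inr_mxI] at h1
    exact h1.trans (Ideal.pow_le_self two_ne_zero)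
  -- the fiber product ideal is the intersection
  have h3 : nId k (Fin a) (Fin b) ⊓ mId k (Fin a) (Fin b) =
      mId k (Fin a) (Fin b) * nId k (Fin a) (Fin b) := by
    apply le_antisymm
    · rw [inf_comm]; exact mId_inf_nId_le
    · exact Ideal.mul_le_inf.trans (by rw [inf_comm])
  have hPQ : (I' ⊔ nId k (Fin a) (Fin b)) ⊓ (J' ⊔ mId k (Fin a) (Fin b)) =
      I' ⊔ J' ⊔ mId k (Fin a) (Fin b) * nId k (Fin a) (Fin b) := by
    calc (I' ⊔ nId k (Fin a) (Fin b)) ⊓ (J' ⊔ mId k (Fin a) (Fin b))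
        = (J' ⊔ mId k (Fin a) (Fin b)) ⊓ (I' ⊔ nId k (Fin a) (Fin b)) := by rw [inf_comm]
      _ = J' ⊔ (mId k (Fin a) (Fin b) ⊓ (I' ⊔ nId k (Fin a) (Fin b))) :=
          sup_inf_assoc_of_le _ (hJn'.trans le_sup_right)
      _ = J' ⊔ ((I' ⊔ nId k (Fin a) (Fin b)) ⊓ mId k (Fin a) (Fin b)) := by rw [inf_comm]
      _ = J' ⊔ (I' ⊔ (nId k (Fin a) (Fin b) ⊓ mId k (Fin a) (Fin b))) := by
          rw [sup_inf_assoc_of_le _ hIm']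
      _ = J' ⊔ (I' ⊔ mId k (Fin a) (Fin b) * nId k (Fin a) (Fin b)) := by rw [h3]
      _ = I' ⊔ J' ⊔ mId k (Fin a) (Fin b) * nId k (Fin a) (Fin b) := by
          rw [← sup_assoc, sup_comm J' I', sup_assoc]
  rw [← hPQ]
  -- the sup of the two ideals is the graded maximal ideal
  have hsup : (I' ⊔ nId k (Fin a) (Fin b)) ⊔ (J' ⊔ mId k (Fin a) (Fin b)) =
      mxI k (Fin a ⊕ Fin b) := by
    rw [mxI_sum_eq]
    apply le_antisymm
    · exact sup_le (sup_le (hIm'.trans le_sup_left) le_sup_right)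
        (sup_le (hJn'.trans le_sup_right) le_sup_left)
    · exact sup_le (le_sup_right.trans le_sup_right) (le_sup_right.trans le_sup_left)
  -- depth transfer: the graded maximal ideal is not associated
  have hsurjL : Function.Surjective (psiL k (Fin a) (Fin b)) :=
    fun g => ⟨rename Sum.inl g, psiL_rename g⟩
  have hsurjR : Function.Surjective (psiR k (Fin a) (Fin b)) :=
    fun g => ⟨rename Sum.inr g, psiR_rename g⟩
  have hassP : mxI k (Fin a ⊕ Fin b) ∉ associatedPrimes (MvPolynomial (Fin a ⊕ Fin b) k)
      (MvPolynomial (Fin a ⊕ Fin b) k ⧸ (I' ⊔ nId k (Fin a) (Fin b))) := by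
    intro hmem
    have hc : I' ⊔ nId k (Fin a) (Fin b) = Ideal.comap (psiL k (Fin a) (Fin b)) I := by
      rw [comap_psiL, hI']
    rw [hc] at hmem
    have h2 := map_mem_assocP_of_surjective (psiL k (Fin a) (Fin b)) hsurjL I hmem
    rw [mxI_sum_eq, Ideal.map_sup, map_psiL_nId, ← map_rename_inl_mxI,
      map_psiL_map_rename, sup_bot_eq] at h2
    exact hdepthI h2
  have hassQ : mxI k (Fin a ⊕ Fin b) ∉ associatedPrimes (MvPolynomial (Fin a ⊕ Fin b) k)
      (MvPolynomial (Fin a ⊕ Fin b) k ⧸ (J' ⊔ mId k (Fin a) (Fin b))) := by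
    intro hmem
    have hc : J' ⊔ mId k (Fin a) (Fin b) = Ideal.comap (psiR k (Fin a) (Fin b)) J := by
      rw [comap_psiR, hJ']
    rw [hc] at hmem
    have h2 := map_mem_assocP_of_surjective (psiR k (Fin a) (Fin b)) hsurjR J hmem
    rw [mxI_sum_eq, Ideal.map_sup, map_psiR_mId, ← map_rename_inr_mxI,
      map_psiR_map_rename, bot_sup_eq] at h2
    exact hdepthJ h2
  -- associated primes of the intersection
  have hle1 := assocP_inf_subset (I' ⊔ nId k (Fin a) (Fin b)) (J' ⊔ mId k (Fin a) (Fin b))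
  have hle2 : associatedPrimes (MvPolynomial (Fin a ⊕ Fin b) k)
      (MvPolynomial (Fin a ⊕ Fin b) k ⧸ (I' ⊔ nId k (Fin a) (Fin b))) ⊆
      associatedPrimes (MvPolynomial (Fin a ⊕ Fin b) k)
      (MvPolynomial (Fin a ⊕ Fin b) k ⧸
        ((I' ⊔ nId k (Fin a) (Fin b)) ⊓ (J' ⊔ mId k (Fin a) (Fin b)))) :=
    assocP_quot_subset _ _ (by rw [hsup]; exact mxI_isMaximal) (by rw [hsup]; exact hassP)
  have hle3 : associatedPrimes (MvPolynomial (Fin a ⊕ Fin b) k)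
      (MvPolynomial (Fin a ⊕ Fin b) k ⧸ (J' ⊔ mId k (Fin a) (Fin b))) ⊆
      associatedPrimes (MvPolynomial (Fin a ⊕ Fin b) k)
      (MvPolynomial (Fin a ⊕ Fin b) k ⧸
        ((I' ⊔ nId k (Fin a) (Fin b)) ⊓ (J' ⊔ mId k (Fin a) (Fin b)))) := by
    have h := assocP_quot_subset (J' ⊔ mId k (Fin a) (Fin b)) (I' ⊔ nId k (Fin a) (Fin b))
      (by rw [sup_comm (J' ⊔ mId k (Fin a) (Fin b)) (I' ⊔ nId k (Fin a) (Fin b)), hsup]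
          exact mxI_isMaximal)
      (by rw [sup_comm (J' ⊔ mId k (Fin a) (Fin b)) (I' ⊔ nId k (Fin a) (Fin b)), hsup]
          exact hassQ)
    rwa [inf_comm (J' ⊔ mId k (Fin a) (Fin b)) (I' ⊔ nId k (Fin a) (Fin b))] at h
  -- localization keys
  have keyP : ∀ (P : Ideal (MvPolynomial (Fin a ⊕ Fin b) k))
      (hP : P ∈ associatedPrimes (MvPolynomial (Fin a ⊕ Fin b) k)
        (MvPolynomial (Fin a ⊕ Fin b) k ⧸ (I' ⊔ nId k (Fin a) (Fin b)))),
      haveI := hP.isPrime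
      Ideal.map (algebraMap (MvPolynomial (Fin a ⊕ Fin b) k) (Localization.AtPrime P))
          (((I' ⊔ nId k (Fin a) (Fin b)) ⊓ (J' ⊔ mId k (Fin a) (Fin b))) ^ s) =
        Ideal.map (algebraMap (MvPolynomial (Fin a ⊕ Fin b) k) (Localization.AtPrime P))
          ((I' ⊔ nId k (Fin a) (Fin b)) ^ s) := by
    intro P hP
    haveI := hP.isPrime
    have hP'le : I' ⊔ nId k (Fin a) (Fin b) ≤ P := le_of_mem_assocP_quotient hP
    have hnot : ¬ mId k (Fin a) (Fin b) ≤ P := by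
      intro hle
      have hM : mxI k (Fin a ⊕ Fin b) ≤ P := by
        rw [mxI_sum_eq]
        exact sup_le hle (le_sup_right.trans hP'le)
      have heq := mxI_isMaximal.eq_of_le hP.isPrime.ne_top hM
      exact hassP (heq ▸ hP)
    obtain ⟨x, hxm, hxP⟩ := SetLike.not_le_iff_exists.mp hnot
    rw [Ideal.map_pow, Ideal.map_pow]
    congr 1
    apply loc_map_eq P _ _ inf_le_left x hxP
    intro g hg
    obtain ⟨gi, hgi, gn, hgn, rfl⟩ := Submodule.mem_sup.mp hg
    rw [mul_add]
    apply Submodule.add_mem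
    · refine Submodule.mem_inf.mpr ⟨?_, ?_⟩
      · exact Submodule.mem_sup_left (Ideal.mul_mem_left _ x hgi)
      · exact Submodule.mem_sup_right (Ideal.mul_mem_left _ x (hIm' hgi))
    · refine Submodule.mem_inf.mpr ⟨?_, ?_⟩
      · exact Submodule.mem_sup_right (Ideal.mul_mem_left _ x hgn)
      · exact Submodule.mem_sup_right (Ideal.mul_mem_right _ _ hxm)
  have keyQ : ∀ (P : Ideal (MvPolynomial (Fin a ⊕ Fin b) k))
      (hP : P ∈ associatedPrimes (MvPolynomial (Fin a ⊕ Fin b) k)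
        (MvPolynomial (Fin a ⊕ Fin b) k ⧸ (J' ⊔ mId k (Fin a) (Fin b)))),
      haveI := hP.isPrime
      Ideal.map (algebraMap (MvPolynomial (Fin a ⊕ Fin b) k) (Localization.AtPrime P))
          (((I' ⊔ nId k (Fin a) (Fin b)) ⊓ (J' ⊔ mId k (Fin a) (Fin b))) ^ s) =
        Ideal.map (algebraMap (MvPolynomial (Fin a ⊕ Fin b) k) (Localization.AtPrime P))
          ((J' ⊔ mId k (Fin a) (Fin b)) ^ s) := by
    intro P hP
    haveI := hP.isPrime
    have hQ'le : J' ⊔ mId k (Fin a) (Fin b) ≤ P := le_of_mem_assocP_quotient hP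
    have hnot : ¬ nId k (Fin a) (Fin b) ≤ P := by
      intro hle
      have hM : mxI k (Fin a ⊕ Fin b) ≤ P := by
        rw [mxI_sum_eq]
        exact sup_le (le_sup_right.trans hQ'le) hle
      have heq := mxI_isMaximal.eq_of_le hP.isPrime.ne_top hM
      exact hassQ (heq ▸ hP)
    obtain ⟨y, hyn, hyP⟩ := SetLike.not_le_iff_exists.mp hnot
    rw [Ideal.map_pow, Ideal.map_pow]
    congr 1
    apply loc_map_eq P _ _ inf_le_right y hyP
    intro g hg
    obtain ⟨gj, hgj, gm, hgm, rfl⟩ := Submodule.mem_sup.mp hg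
    rw [mul_add]
    apply Submodule.add_mem
    · refine Submodule.mem_inf.mpr ⟨?_, ?_⟩
      · exact Submodule.mem_sup_right (Ideal.mul_mem_left _ y (hJn' hgj))
      · exact Submodule.mem_sup_left (Ideal.mul_mem_left _ y hgj)
    · refine Submodule.mem_inf.mpr ⟨?_, ?_⟩
      · exact Submodule.mem_sup_right (Ideal.mul_mem_right _ _ hyn)
      · exact Submodule.mem_sup_right (Ideal.mul_mem_left _ y hgm)
  -- final assembly
  simp only [symbPow]
  apply le_antisymm
  · apply le_inf
    · apply le_sInf
      rintro Jx ⟨P, hP, rfl⟩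
      refine sInf_le ⟨P, hle2 hP, ?_⟩
      rw [keyP P hP]
    · apply le_sInf
      rintro Jx ⟨P, hP, rfl⟩
      refine sInf_le ⟨P, hle3 hP, ?_⟩
      rw [keyQ P hP]
  · apply le_sInf
    rintro Jx ⟨P, hPF, rfl⟩
    rcases hle1 hPF with hP | hQ
    · exact inf_le_left.trans (sInf_le ⟨P, hP, by rw [keyP P hP]⟩)
    · exact inf_le_right.trans (sInf_le ⟨P, hQ, by rw [keyQ P hQ]⟩)


end
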